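/- arXiv:2507.05036 — 7 statements merged into one kernel-verified Lean document; each statement's English description precedes it below -/
import Mathlib

section
/- Let q : Fin 3 → ℂ. The matrix A = (uΞ q) * (uΞ q)ᴴ is Hermitian, and every eigenvalue of A (in the sense of Matrix.IsHermitian.eigenvalues) equals ‖q 0‖² + ‖q 1‖² + ‖q 2‖². Consequently, every singular value of uΞ q equals the Euclidean norm of q. -/
open scoped Matrix

noncomputable section

/-- The 3×9 matrix gain representing the nonlinear advection term `u·∇u`:
`(uΞ q) i (i', j) = if i = i' then -(q j) else 0`. -/
def uΞ (q : Fin 3 → ℂ) : Matrix (Fin 3) (Fin 3 × Fin 3) ℂ :=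
  fun i p => if i = p.1 then -(q p.2) else 0

theorem uXi_eigenvalues_and_singular_values (q : Fin 3 → ℂ) :
    ((uΞ q) * (uΞ q)ᴴ).IsHermitian ∧
      ∀ (hA : ((uΞ q) * (uΞ q)ᴴ).IsHermitian) (i : Fin 3),
        hA.eigenvalues i = ‖q 0‖ ^ 2 + ‖q 1‖ ^ 2 + ‖q 2‖ ^ 2 ∧
        Real.sqrt (hA.eigenvalues i) =
          Real.sqrt (‖q 0‖ ^ 2 + ‖q 1‖ ^ 2 + ‖q 2‖ ^ 2) := by
  set c : ℝ := ‖q 0‖ ^ 2 + ‖q 1‖ ^ 2 + ‖q 2‖ ^ 2 with hc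
  have hA_eq : (uΞ q) * (uΞ q)ᴴ = (c : ℂ) • (1 : Matrix (Fin 3) (Fin 3) ℂ) := by
    ext i j
    simp only [Matrix.mul_apply, Matrix.conjTranspose_apply, Fintype.sum_prod_type, uΞ,
      Matrix.smul_apply, Matrix.one_apply, smul_eq_mul]
    by_cases h : i = j
    · subst h
      simp [Fin.sum_univ_succ, Complex.mul_conj, hc, Complex.ofReal_add, Complex.ofReal_pow,
        Complex.sq_norm, mul_comm]
      ring
    · simp [h, Ne.symm h]
  refine ⟨Matrix.isHermitian_mul_conjTranspose_self _, fun hA i => ?_⟩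
  have hv : ((c : ℂ) • (1 : Matrix (Fin 3) (Fin 3) ℂ)) *ᵥ ⇑(hA.eigenvectorBasis i) = hA.eigenvalues i • ⇑(hA.eigenvectorBasis i) := by
    rw [← hA_eq]; exact hA.mulVec_eigenvectorBasis i
  simp only [Matrix.smul_mulVec, Matrix.one_mulVec] at hv
  have hvne : ⇑(hA.eigenvectorBasis i) ≠ 0 := fun h => hA.eigenvectorBasis.orthonormal.ne_zero i (by simpa using congrArg (WithLp.toLp 2) h)
  have : ((c : ℂ) - (hA.eigenvalues i : ℂ)) • ⇑(hA.eigenvectorBasis i) = 0 := by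
    rw [sub_smul, sub_eq_zero]
    ext j
    have h3 := congrFun hv j
    simp only [Pi.smul_apply, smul_eq_mul, Complex.real_smul] at h3 ⊢
    convert h3
  rcases smul_eq_zero.mp this with h | h
  · have : (c : ℂ) = (hA.eigenvalues i : ℂ) := sub_eq_zero.mp h
    have h2 := Complex.ofReal_injective this
    exact ⟨h2.symm, congrArg Real.sqrt h2.symm⟩
  · exact absurd h hvne
end
end

section
/- Let q : Fin 3 → ℂ. Then the L2 operator norm of the matrix uΞ q equals Real.sqrt (‖q 0‖² + ‖q 1‖² + ‖q 2‖²), i.e., the largest singular value of uΞ q equals the Euclidean norm of the perturbation vector q. -/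
open scoped Matrix.Norms.L2Operator
open Matrix

noncomputable section

theorem l2_opNorm_uXi (q : Fin 3 → ℂ) :
    ‖uΞ q‖ = Real.sqrt (‖q 0‖ ^ 2 + ‖q 1‖ ^ 2 + ‖q 2‖ ^ 2) := by
  set c : ℝ := ‖q 0‖ ^ 2 + ‖q 1‖ ^ 2 + ‖q 2‖ ^ 2 with hc
  have key : ((uΞ q)ᴴ)ᴴ * (uΞ q)ᴴ = (c : ℂ) • (1 : Matrix (Fin 3) (Fin 3) ℂ) := by
    ext i j
    simp only [Matrix.conjTranspose_conjTranspose, Matrix.mul_apply, uΞ,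
      Matrix.conjTranspose_apply, Fintype.sum_prod_type, Matrix.smul_apply,
      Matrix.one_apply]
    by_cases h : i = j
    · subst h
      simp [Fin.sum_univ_three, Complex.mul_conj', hc, Complex.normSq_eq_norm_sq]
      ring
    · simp [h, Ne.symm h]
  have h2 : ‖uΞ q‖ * ‖uΞ q‖ = c := by
    rw [← Matrix.l2_opNorm_conjTranspose (uΞ q),
      ← Matrix.l2_opNorm_conjTranspose_mul_self ((uΞ q)ᴴ), key]
    rw [norm_smul]
    have : ‖(c:ℂ)‖ = c := by
      simp [Complex.norm_real, abs_of_nonneg (by positivity : (0:ℝ) ≤ c)]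
    rw [this]
    simp
  have hnn : 0 ≤ ‖uΞ q‖ := norm_nonneg _
  nlinarith [Real.sq_sqrt (by positivity : (0:ℝ) ≤ c), Real.sqrt_nonneg c, hnn,
    h2]
end
end

section
/- Let n and m be finite types with decidable equality, let M : Matrix n m ℂ and Δ : Matrix m n ℂ. If the matrix 1 - M * Δ is not invertible (equivalently det (1 - M * Δ) = 0), then 1 ≤ ‖M‖ * ‖Δ‖ (L2 operator norms); equivalently, every destabilizing uncertainty Δ satisfies ‖Δ‖ ≥ ‖M‖⁻¹. -/
open scoped Matrix.Norms.L2Operator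
open scoped Matrix

theorem small_gain_necessity {n m : Type*}
    [Fintype n] [Fintype m] [DecidableEq n] [DecidableEq m]
    (M : Matrix n m ℂ) (Δ : Matrix m n ℂ) (h : ¬ IsUnit (1 - M * Δ)) :
    1 ≤ ‖M‖ * ‖Δ‖ := by
  have hdet : (1 - M * Δ).det = 0 := by
    by_contra hd
    exact h ((Matrix.isUnit_iff_isUnit_det _).mpr (isUnit_iff_ne_zero.mpr hd))
  obtain ⟨v, hv, hmul⟩ := (Matrix.exists_mulVec_eq_zero_iff).mpr hdet
  have hfix : (M * Δ) *ᵥ v = v := by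
    have h2 : v - (M * Δ) *ᵥ v = 0 := by
      rw [Matrix.sub_mulVec, Matrix.one_mulVec] at hmul
      exact hmul
    exact (sub_eq_zero.mp h2).symm
  set x : EuclideanSpace ℂ n := (EuclideanSpace.equiv n ℂ).symm v with hx
  have hxne : x ≠ 0 := by
    simpa [hx] using hv
  have hxpos : 0 < ‖x‖ := norm_pos_iff.mpr hxne
  have key : ‖x‖ ≤ ‖M * Δ‖ * ‖x‖ := by
    calc ‖x‖ = ‖(EuclideanSpace.equiv n ℂ).symm ((M * Δ) *ᵥ v)‖ := by rw [hfix]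
    _ ≤ ‖M * Δ‖ * ‖x‖ := Matrix.l2_opNorm_mulVec _ _
  have h1 : 1 ≤ ‖M * Δ‖ := by
    nlinarith
  calc (1:ℝ) ≤ ‖M * Δ‖ := h1
  _ ≤ ‖M‖ * ‖Δ‖ := Matrix.l2_opNorm_mul _ _
end

section
/- Let n and m be nonempty finite types with decidable equality, let M : Matrix n m ℂ and let γ : ℝ with 0 < γ. Then the feedback interconnection is robustly stable against all unstructured uncertainties of size less than 1/γ if and only if the gain of M is at most γ; precisely: (∀ Δ : Matrix m n ℂ, ‖Δ‖ < 1/γ → IsUnit (1 - M * Δ)) ↔ ‖M‖ ≤ γ. (Unstructured small gain theorem at a fixed frequency; the necessity direction requires constructing a destabilizing rank-one Δ from the singular value decomposition of M.) -/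
open scoped Matrix.Norms.L2Operator

open Matrix in
private lemma vecMulVec_mulVec' {m n : Type*} [Fintype n] (a : m → ℂ) (b v : n → ℂ) :
    (vecMulVec a b) *ᵥ v = (b ⬝ᵥ v) • a := by
  funext i
  simp [vecMulVec, mulVec, dotProduct, Finset.mul_sum, mul_comm, mul_left_comm]

open Matrix in
theorem unstructured_small_gain {n m : Type*}
    [Fintype n] [Fintype m] [DecidableEq n] [DecidableEq m]
    [Nonempty n] [Nonempty m]
    (M : Matrix n m ℂ) (γ : ℝ) (hγ : 0 < γ) :
    (∀ Δ : Matrix m n ℂ, ‖Δ‖ < 1 / γ → IsUnit (1 - M * Δ)) ↔ ‖M‖ ≤ γ := by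
  constructor
  · intro h
    by_contra hM
    push_neg at hM
    -- the CLM associated to M
    set f : EuclideanSpace ℂ m →L[ℂ] EuclideanSpace ℂ n :=
      (Matrix.toEuclideanLin.trans LinearMap.toContinuousLinearMap) M with hf
    have hMf : ‖M‖ = ‖f‖ := Matrix.l2_opNorm_def M
    -- norm attainment on the compact unit sphere
    obtain ⟨x, hx, hmax⟩ := (isCompact_sphere (0 : EuclideanSpace ℂ m) 1).exists_isMaxOn
      (NormedSpace.sphere_nonempty.mpr zero_le_one)
      (continuous_norm.comp f.continuous).continuousOn
    have hx1 : ‖x‖ = 1 := by simpa using mem_sphere_zero_iff_norm.mp hx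
    have hfx : ‖f x‖ = ‖f‖ := by
      refine le_antisymm (by simpa [hx1] using f.le_opNorm x) ?_
      refine f.opNorm_le_bound (norm_nonneg _) fun y => ?_
      rcases eq_or_ne y 0 with rfl | hy
      · simp
      · have hyn : (0 : ℝ) < ‖y‖ := norm_pos_iff.mpr hy
        have hmem : (‖y‖⁻¹ • y) ∈ Metric.sphere (0 : EuclideanSpace ℂ m) 1 := by
          simp [norm_smul, abs_of_pos hyn, inv_mul_cancel₀ hyn.ne']
        have h3 : ‖f (‖y‖⁻¹ • y)‖ ≤ ‖f x‖ := hmax hmem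
        rw [ContinuousLinearMap.map_smul_of_tower, norm_smul, norm_inv, norm_norm] at h3
        calc ‖f y‖ = ‖y‖ * (‖y‖⁻¹ * ‖f y‖) := by field_simp
          _ ≤ ‖y‖ * ‖f x‖ := mul_le_mul_of_nonneg_left h3 hyn.le
          _ = ‖f x‖ * ‖y‖ := mul_comm _ _
    set w : EuclideanSpace ℂ n := f x with hw
    have hwnorm : ‖w‖ = ‖M‖ := by rw [hw, hfx, hMf]
    have hwpos : (0 : ℝ) < ‖w‖ := by rw [hwnorm]; exact hγ.trans hM
    have hwne : w ≠ 0 := norm_pos_iff.mp hwpos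
    -- destabilizing rank-one perturbation
    set xv : m → ℂ := WithLp.equiv 2 (m → ℂ) x with hxv
    set wv : n → ℂ := WithLp.equiv 2 (n → ℂ) w with hwv
    set Δ : Matrix m n ℂ := (((‖w‖ : ℂ)^2)⁻¹) • Matrix.vecMulVec xv (star wv) with hΔ
    -- key inner-product identities
    have hdot : ∀ v : EuclideanSpace ℂ n, star wv ⬝ᵥ (WithLp.equiv 2 (n → ℂ) v)
        = (inner ℂ w v : ℂ) := by
      intro v
      simp [dotProduct, PiLp.inner_apply, wv]
      exact Finset.sum_congr rfl fun _ _ => mul_comm _ _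
    have hdotw : star wv ⬝ᵥ wv = (‖w‖ : ℂ)^2 := by
      rw [hdot w]
      exact inner_self_eq_norm_sq_to_K w
    have hΔw : Δ *ᵥ wv = xv := by
      rw [hΔ, Matrix.smul_mulVec, vecMulVec_mulVec', hdotw, smul_smul,
        inv_mul_cancel₀ (by exact pow_ne_zero 2 (Complex.ofReal_ne_zero.mpr hwpos.ne')), one_smul]
    -- norm bound on Δ
    have hΔnorm : ‖Δ‖ ≤ ‖w‖⁻¹ := by
      rw [Matrix.l2_opNorm_def]
      refine ContinuousLinearMap.opNorm_le_bound _ (by positivity) fun v => ?_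
      have happ : (Matrix.toEuclideanLin.trans LinearMap.toContinuousLinearMap) Δ v
          = ((((‖w‖ : ℂ)^2)⁻¹ * (inner ℂ w v : ℂ)) • x : EuclideanSpace ℂ m) := by
        apply (WithLp.equiv 2 (m → ℂ)).injective
        have : WithLp.equiv 2 (m → ℂ)
            ((Matrix.toEuclideanLin.trans LinearMap.toContinuousLinearMap) Δ v)
            = Δ *ᵥ (WithLp.equiv 2 (n → ℂ) v) := rfl
        rw [this, hΔ, Matrix.smul_mulVec, vecMulVec_mulVec', hdot v, smul_smul]
        rfl
      rw [happ]
      rw [norm_smul, hx1, mul_one, norm_mul]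
      have h1 : ‖((‖w‖ : ℂ)^2)⁻¹‖ = (‖w‖^2)⁻¹ := by
        rw [norm_inv]
        norm_cast
        simp [abs_of_nonneg (sq_nonneg ‖w‖)]
      have h2 : ‖(inner ℂ w v : ℂ)‖ ≤ ‖w‖ * ‖v‖ := norm_inner_le_norm w v
      rw [h1]
      calc (‖w‖^2)⁻¹ * ‖(inner ℂ w v : ℂ)‖ ≤ (‖w‖^2)⁻¹ * (‖w‖ * ‖v‖) := by
            exact mul_le_mul_of_nonneg_left h2 (by positivity)
        _ = ‖w‖⁻¹ * ‖v‖ := by field_simp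
    have hΔlt : ‖Δ‖ < 1 / γ := by
      refine hΔnorm.trans_lt ?_
      rw [inv_eq_one_div]
      exact div_lt_div_of_pos_left one_pos hγ (hwnorm ▸ hM)
    -- derive the contradiction
    obtain ⟨u, hu⟩ := h Δ hΔlt
    have hMx : M *ᵥ xv = wv := rfl
    have hker : (1 - M * Δ) *ᵥ wv = 0 := by
      rw [Matrix.sub_mulVec, Matrix.one_mulVec, ← Matrix.mulVec_mulVec, hΔw, hMx, sub_self]
    have : wv = 0 := by
      have h1 : (((u⁻¹ : (Matrix n n ℂ)ˣ) : Matrix n n ℂ) * (1 - M * Δ)) *ᵥ wv = wv := by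
        rw [← hu, Units.inv_mul, Matrix.one_mulVec]
      rw [← h1, ← Matrix.mulVec_mulVec, hker, Matrix.mulVec_zero]
    exact hwne (by simpa [wv] using this)
  · intro hMγ Δ hΔ
    have h1 : ‖M * Δ‖ < 1 := by
      calc ‖M * Δ‖ ≤ ‖M‖ * ‖Δ‖ := Matrix.l2_opNorm_mul M Δ
        _ ≤ γ * ‖Δ‖ := mul_le_mul_of_nonneg_right hMγ (norm_nonneg _)
        _ < γ * (1 / γ) := by
            exact mul_lt_mul_of_pos_left hΔ hγ
        _ = 1 := by field_simp
    exact isUnit_one_sub_of_norm_lt_one h1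
end

section
/- Let n and m be nonempty finite types with decidable equality and let M : Matrix n m ℂ with M ≠ 0. Then there exists Δ : Matrix m n ℂ with ‖Δ‖ = ‖M‖⁻¹ such that 1 - M * Δ is not invertible; consequently sInf {r : ℝ | ∃ Δ : Matrix m n ℂ, ¬ IsUnit (1 - M * Δ) ∧ r = ‖Δ‖} = ‖M‖⁻¹. (Thus the structured singular value with respect to the set of ALL complex matrices equals the largest singular value: μ(M) = ‖M‖.) -/
open scoped Matrix.Norms.L2Operator
open Matrix

open Matrix in
private lemma aux_exists_unit_norm_apply_eq {E F : Type*} [NormedAddCommGroup E]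
    [NormedSpace ℂ E] [FiniteDimensional ℂ E] [Nontrivial E]
    [NormedAddCommGroup F] [NormedSpace ℂ F]
    (f : E →L[ℂ] F) : ∃ v : E, ‖v‖ = 1 ∧ ‖f v‖ = ‖f‖ := by
  have hcs : IsCompact (Metric.sphere (0 : E) 1) := isCompact_sphere 0 1
  have hne : (Metric.sphere (0 : E) 1).Nonempty :=
    NormedSpace.sphere_nonempty.mpr zero_le_one
  obtain ⟨v, hv, hmax⟩ := hcs.exists_isMaxOn hne
    ((continuous_norm.comp f.continuous).continuousOn)
  rw [Metric.mem_sphere, dist_zero_right] at hv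
  refine ⟨v, hv, le_antisymm (f.unit_le_opNorm v hv.le) ?_⟩
  refine f.opNorm_le_bound (norm_nonneg _) fun x => ?_
  rcases eq_or_ne x 0 with rfl | hx
  · simp
  · have hxn : (0:ℝ) < ‖x‖ := norm_pos_iff.mpr hx
    have hmem : ‖x‖⁻¹ • x ∈ Metric.sphere (0 : E) 1 := by
      simp [norm_smul, abs_of_pos (inv_pos.mpr hxn), inv_mul_cancel₀ hxn.ne']
    have h1 : ‖f (‖x‖⁻¹ • x)‖ ≤ ‖f v‖ := hmax hmem
    rw [ContinuousLinearMap.map_smul_of_tower, norm_smul, norm_inv, norm_norm] at h1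
    have h2 := mul_le_mul_of_nonneg_left h1 hxn.le
    rw [← mul_assoc, mul_inv_cancel₀ hxn.ne', one_mul] at h2
    linarith [h2]

theorem mu_unstructured_eq_norm {n m : Type*}
    [Fintype n] [Fintype m] [DecidableEq n] [DecidableEq m]
    [Nonempty n] [Nonempty m]
    (M : Matrix n m ℂ) (hM : M ≠ 0) :
    (∃ Δ : Matrix m n ℂ, ‖Δ‖ = ‖M‖⁻¹ ∧ ¬ IsUnit (1 - M * Δ)) ∧
      sInf {r : ℝ | ∃ Δ : Matrix m n ℂ, ¬ IsUnit (1 - M * Δ) ∧ r = ‖Δ‖}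
        = ‖M‖⁻¹ := by
  classical
  have hMpos : (0:ℝ) < ‖M‖ := norm_pos_iff.mpr hM
  -- the associated continuous linear map
  set g : EuclideanSpace ℂ m →L[ℂ] EuclideanSpace ℂ n :=
    ((Matrix.toEuclideanLin (𝕜 := ℂ) (m := n) (n := m)).trans LinearMap.toContinuousLinearMap) M with hgdef
  have hMg : ‖M‖ = ‖g‖ := Matrix.l2_opNorm_def M
  obtain ⟨v, hv1, hv2⟩ := aux_exists_unit_norm_apply_eq g
  rw [← hMg] at hv2
  have hgv : ∀ x : EuclideanSpace ℂ m,
      g x = (WithLp.equiv 2 (n → ℂ)).symm (M *ᵥ (WithLp.equiv 2 (m → ℂ)) x) := by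
    intro x
    simp only [hgdef, LinearEquiv.trans_apply, LinearMap.coe_toContinuousLinearMap',
      Matrix.toEuclideanLin_apply]
    rfl
  set c : ℂ := ((‖M‖ : ℝ) : ℂ)⁻¹ with hc
  have hcnorm : ‖c‖ = ‖M‖⁻¹ := by
    rw [hc, norm_inv, Complex.norm_real, norm_norm]
  set u : EuclideanSpace ℂ n := c • g v with hu
  have hu1 : ‖u‖ = 1 := by
    rw [hu, norm_smul, hcnorm, hv2, inv_mul_cancel₀ hMpos.ne']
  set v' : m → ℂ := (WithLp.equiv 2 (m → ℂ)) v with hv'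
  set u' : n → ℂ := (WithLp.equiv 2 (n → ℂ)) u with hu'
  set Δ : Matrix m n ℂ := c • Matrix.vecMulVec v' (star u') with hΔdef
  -- key computation for Δ *ᵥ
  have hΔmul : ∀ x : EuclideanSpace ℂ n,
      Δ *ᵥ (WithLp.equiv 2 (n → ℂ)) x = (c * (inner ℂ u x : ℂ)) • v' := by
    intro x
    funext i
    simp only [hΔdef, Matrix.mulVec, dotProduct, Pi.smul_apply, smul_eq_mul,
      Matrix.smul_apply, Matrix.vecMulVec_apply,
      EuclideanSpace.inner_eq_star_dotProduct, Pi.star_apply, Finset.mul_sum, Finset.sum_mul]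
    exact Finset.sum_congr rfl fun j _ => by
      change c * (v' i * star (u.ofLp j)) * x.ofLp j = c * (x.ofLp j * star (u.ofLp j)) * v' i; ring
  -- the CLM of Δ
  set gΔ : EuclideanSpace ℂ n →L[ℂ] EuclideanSpace ℂ m :=
    ((Matrix.toEuclideanLin (𝕜 := ℂ) (m := m) (n := n)).trans LinearMap.toContinuousLinearMap) Δ with hgΔdef
  have hgΔ : ∀ x : EuclideanSpace ℂ n,
      gΔ x = (c * (inner ℂ u x : ℂ)) • v := by
    intro x
    simp only [hgΔdef, LinearEquiv.trans_apply, LinearMap.coe_toContinuousLinearMap',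
      Matrix.toEuclideanLin_apply]
    rw [show x.ofLp = (WithLp.equiv 2 (n → ℂ)) x from rfl, hΔmul x]
    rfl
  have hgΔnorm : ∀ x : EuclideanSpace ℂ n, ‖gΔ x‖ = ‖M‖⁻¹ * ‖(inner ℂ u x : ℂ)‖ := by
    intro x
    rw [hgΔ x, norm_smul, norm_mul, hcnorm, hv1, mul_one]
  have hΔnorm : ‖Δ‖ = ‖M‖⁻¹ := by
    rw [Matrix.l2_opNorm_def, ← hgΔdef]
    refine le_antisymm (gΔ.opNorm_le_bound (inv_nonneg.mpr (norm_nonneg M)) fun x => ?_) ?_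
    · rw [hgΔnorm x]
      calc ‖M‖⁻¹ * ‖(inner ℂ u x : ℂ)‖ ≤ ‖M‖⁻¹ * (‖u‖ * ‖x‖) := by
            gcongr; exact norm_inner_le_norm u x
        _ = ‖M‖⁻¹ * ‖x‖ := by rw [hu1, one_mul]
    · have h := gΔ.le_opNorm u
      rw [hgΔnorm u, hu1, mul_one] at h
      have : (inner ℂ u u : ℂ) = 1 := by
        rw [inner_self_eq_norm_sq_to_K, hu1]; norm_num
      rw [this] at h
      simpa using h
  -- the singularity
  have hMΔu : (M * Δ) *ᵥ u' = u' := by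
    rw [← Matrix.mulVec_mulVec, hu', hΔmul u]
    have : (inner ℂ u u : ℂ) = 1 := by
      rw [inner_self_eq_norm_sq_to_K, hu1]; norm_num
    rw [this, mul_one, Matrix.mulVec_smul]
    have : M *ᵥ v' = (WithLp.equiv 2 (n → ℂ)) (g v) := by
      rw [hgv v]; rfl
    rw [this]
    rfl
  have hu'ne : u' ≠ 0 := by
    intro h
    have : u = 0 := by
      apply (WithLp.equiv 2 (n → ℂ)).injective
      exact h
    rw [this, norm_zero] at hu1
    exact one_ne_zero hu1.symm
  have hnotunit : ¬ IsUnit (1 - M * Δ) := by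
    intro h
    have hinj := Matrix.mulVec_injective_iff_isUnit.mpr h
    have h0 : (1 - M * Δ) *ᵥ u' = (1 - M * Δ) *ᵥ 0 := by
      rw [Matrix.sub_mulVec, Matrix.one_mulVec, hMΔu, sub_self, Matrix.mulVec_zero]
    exact hu'ne (hinj h0)
  refine ⟨⟨Δ, hΔnorm, hnotunit⟩, ?_⟩
  -- the infimum
  set S : Set ℝ := {r : ℝ | ∃ Δ : Matrix m n ℂ, ¬ IsUnit (1 - M * Δ) ∧ r = ‖Δ‖} with hS
  have hmem : ‖M‖⁻¹ ∈ S := ⟨Δ, hnotunit, hΔnorm.symm⟩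
  have hlb : ∀ r ∈ S, ‖M‖⁻¹ ≤ r := by
    rintro r ⟨D, hD, rfl⟩
    rw [Matrix.isUnit_iff_isUnit_det, isUnit_iff_ne_zero, not_not] at hD
    obtain ⟨x, hx0, hx⟩ := Matrix.exists_mulVec_eq_zero_iff.mpr hD
    rw [Matrix.sub_mulVec, Matrix.one_mulVec, sub_eq_zero] at hx
    set xe : EuclideanSpace ℂ n := (WithLp.equiv 2 (n → ℂ)).symm x with hxe
    set ye : EuclideanSpace ℂ m := (WithLp.equiv 2 (m → ℂ)).symm (D *ᵥ x) with hye
    have hxe0 : xe ≠ 0 := by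
      intro h
      exact hx0 (by simpa [hxe] using congrArg (WithLp.equiv 2 (n → ℂ)) h)
    have hxepos : (0:ℝ) < ‖xe‖ := norm_pos_iff.mpr hxe0
    have hDx : ‖ye‖ ≤ ‖D‖ * ‖xe‖ := Matrix.l2_opNorm_mulVec D xe
    have hxx : M *ᵥ (D *ᵥ x) = x := by rw [Matrix.mulVec_mulVec]; exact hx.symm
    have hMDx : ‖xe‖ ≤ ‖M‖ * ‖ye‖ := by
      have h := Matrix.l2_opNorm_mulVec M ye
      have hxx2 : ((EuclideanSpace.equiv n ℂ).symm (M *ᵥ ye) : EuclideanSpace ℂ n) = xe := by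
        show ((WithLp.equiv 2 (n → ℂ)).symm (M *ᵥ (D *ᵥ x)) : EuclideanSpace ℂ n)
          = (WithLp.equiv 2 (n → ℂ)).symm x
        exact congrArg _ hxx
      rwa [hxx2] at h
    have hchain : ‖xe‖ ≤ ‖M‖ * (‖D‖ * ‖xe‖) :=
      hMDx.trans (mul_le_mul_of_nonneg_left hDx (norm_nonneg _))
    have h1 : 1 ≤ ‖M‖ * ‖D‖ := by
      by_contra hcon
      push_neg at hcon
      have h3 := mul_lt_mul_of_pos_right hcon hxepos
      have e : ‖M‖ * (‖D‖ * ‖xe‖) = ‖M‖ * ‖D‖ * ‖xe‖ := (mul_assoc _ _ _).symm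
      rw [one_mul] at h3
      linarith
    have h2 : ‖M‖⁻¹ * 1 ≤ ‖M‖⁻¹ * (‖M‖ * ‖D‖) :=
      mul_le_mul_of_nonneg_left h1 (inv_nonneg.mpr (norm_nonneg M))
    rwa [mul_one, ← mul_assoc, inv_mul_cancel₀ hMpos.ne', one_mul] at h2
  exact le_antisymm (csInf_le ⟨‖M‖⁻¹, hlb⟩ hmem) (le_csInf ⟨_, hmem⟩ hlb)
end

section
/- Let N : ℕ with 0 < N and let M : Matrix ((Fin N) × Fin 3) ((Fin 3 × Fin N) × Fin 3) ℂ be a (discretized) frequency response matrix. If the destabilizing-norm set S M (Δu N) is nonempty, then the following chain of inequalities holds: ‖M‖⁻¹ ≤ sInf (S M (Δnr N)) ≤ sInf (S M (Δr N)) ≤ sInf (S M (Δu N)); equivalently, μ_{Δu N}(M) ≤ μ_{Δr N}(M) ≤ μ_{Δnr N}(M) ≤ ‖M‖, so the unstructured stability threshold is the most conservative and the componentwise-structured threshold the least conservative. -/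
open scoped Matrix.Norms.L2Operator

/-- The destabilizing-norm set of a matrix `M` with respect to an uncertainty
structure `Δs`: the norms of structured uncertainties that destabilize the
feedback interconnection. -/
noncomputable def destabSet {n m : Type*}
    [Fintype n] [Fintype m] [DecidableEq n] [DecidableEq m]
    (M : Matrix n m ℂ) (Δs : Set (Matrix m n ℂ)) : Set ℝ :=
  {r : ℝ | ∃ Δ ∈ Δs, ¬ IsUnit (1 - M * Δ) ∧ r = ‖Δ‖}

/-- The non-repeated block-diagonal uncertainty set: block-diagonal matrices
with three (possibly distinct) full blocks. -/
def Δnr (N : ℕ) : Set (Matrix ((Fin 3 × Fin N) × Fin 3) ((Fin N) × Fin 3) ℂ) :=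
  {D | ∃ f : Fin 3 → Matrix (Fin 3 × Fin N) (Fin N) ℂ, D = Matrix.blockDiagonal f}

/-- The repeated block-diagonal uncertainty set: block-diagonal matrices with
three copies of a single full block. -/
def Δr (N : ℕ) : Set (Matrix ((Fin 3 × Fin N) × Fin 3) ((Fin N) × Fin 3) ℂ) :=
  {D | ∃ B : Matrix (Fin 3 × Fin N) (Fin N) ℂ, D = Matrix.blockDiagonal (fun _ => B)}

/-- The componentwise uncertainty set: block-diagonal matrices with three
repeated blocks, each block being a stack of three diagonal matrices. -/
def Δu (N : ℕ) : Set (Matrix ((Fin 3 × Fin N) × Fin 3) ((Fin N) × Fin 3) ℂ) :=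
  {D | ∃ B : Matrix (Fin 3 × Fin N) (Fin N) ℂ,
    D = Matrix.blockDiagonal (fun _ => B) ∧
    ∃ d : Fin 3 → Fin N → ℂ, ∀ i k l, B (i, k) l = if k = l then d i k else 0}

lemma destab_mono {n m : Type*}
    [Fintype n] [Fintype m] [DecidableEq n] [DecidableEq m]
    (M : Matrix n m ℂ) {s t : Set (Matrix m n ℂ)} (h : s ⊆ t) :
    destabSet M s ⊆ destabSet M t := by
  rintro r ⟨Δ, hΔ, hu, hr⟩
  exact ⟨Δ, h hΔ, hu, hr⟩

lemma sub_ur (N : ℕ) : Δu N ⊆ Δr N := by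
  rintro D ⟨B, hB, _⟩; exact ⟨B, hB⟩

lemma sub_rnr (N : ℕ) : Δr N ⊆ Δnr N := by
  rintro D ⟨B, hB⟩; exact ⟨fun _ => B, hB⟩

theorem threshold_hierarchy (N : ℕ) (hN : 0 < N)
    (M : Matrix ((Fin N) × Fin 3) ((Fin 3 × Fin N) × Fin 3) ℂ)
    (h : (destabSet M (Δu N)).Nonempty) :
    ‖M‖⁻¹ ≤ sInf (destabSet M (Δnr N)) ∧
      sInf (destabSet M (Δnr N)) ≤ sInf (destabSet M (Δr N)) ∧
      sInf (destabSet M (Δr N)) ≤ sInf (destabSet M (Δu N)) := by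
  have hsub1 : destabSet M (Δu N) ⊆ destabSet M (Δr N) := destab_mono M (sub_ur N)
  have hsub2 : destabSet M (Δr N) ⊆ destabSet M (Δnr N) := destab_mono M (sub_rnr N)
  have hlb : ∀ r ∈ destabSet M (Δnr N), ‖M‖⁻¹ ≤ r := by
    rintro r ⟨Δ, _, hu, rfl⟩
    by_contra hlt
    push_neg at hlt
    apply hu
    have hMpos : 0 < ‖M‖ := by
      rcases (norm_nonneg M).lt_or_eq with hp | hz
      · exact hp
      · exfalso
        have hM0 : M = 0 := by
          have := norm_eq_zero.mp hz.symm
          exact this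
        apply hu
        simp [hM0]
    have h1 : ‖M * Δ‖ < 1 := by
      calc ‖M * Δ‖ ≤ ‖M‖ * ‖Δ‖ := Matrix.l2_opNorm_mul M Δ
        _ < ‖M‖ * ‖M‖⁻¹ := by
              rcases (norm_nonneg Δ).eq_or_lt with hz | hp
              · exfalso
                have : Δ = 0 := norm_eq_zero.mp hz.symm
                apply hu; simp [this]
              · exact (mul_lt_mul_iff_right₀ hMpos).mpr hlt
        _ = 1 := mul_inv_cancel₀ (ne_of_gt hMpos)
    exact (Units.oneSub (M * Δ) h1).isUnit
  have hne_r : (destabSet M (Δr N)).Nonempty := h.mono hsub1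
  have hne_nr : (destabSet M (Δnr N)).Nonempty := hne_r.mono hsub2
  have hbdd : BddBelow (destabSet M (Δnr N)) := ⟨‖M‖⁻¹, hlb⟩
  refine ⟨le_csInf hne_nr hlb, csInf_le_csInf hbdd hne_r hsub2,
    csInf_le_csInf (hbdd.mono hsub2) h hsub1⟩
end

section
/- Let Y be a nonempty finite type (the discretized wall-normal grid), u : Y → (Fin 3 → ℂ) a velocity perturbation field, and M : Matrix ((Fin 3 × Fin 3) × Y) (Fin 3 × Y) ℂ a (discretized) frequency response matrix mapping forcing to velocity gradients. If the largest perturbation magnitude present in the flow satisfies (max over y : Y of Real.sqrt (‖(u y) 0‖² + ‖(u y) 1‖² + ‖(u y) 2‖²)) * ‖M‖ < 1, then the feedback interconnection matrix 1 - M * Matrix.blockDiagonal (fun y => uΞ (u y)) is invertible. (Unstructured finite-amplitude stability criterion: the flow system remains stable whenever the maximal velocity perturbation magnitude is below ‖M‖⁻¹.) -/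
open scoped Matrix.Norms.L2Operator

noncomputable section

/-- Auxiliary: bound the L2 operator norm via a pointwise squared bound on `mulVec`. -/
lemma l2_opNorm_le_of_sq {m n : Type*} [Fintype m] [Fintype n] [DecidableEq m] [DecidableEq n] (A : Matrix m n ℂ) {C : ℝ}
    (hC : 0 ≤ C)
    (hb : ∀ x : EuclideanSpace ℂ n, ∑ i, ‖A.mulVec x i‖ ^ 2 ≤ C ^ 2 * ∑ j, ‖x j‖ ^ 2) :
    ‖A‖ ≤ C := by
  rw [Matrix.l2_opNorm_def]
  refine ContinuousLinearMap.opNorm_le_bound _ hC fun x => ?_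
  have h1 : ‖(Matrix.toEuclideanLin.trans LinearMap.toContinuousLinearMap A) x‖ =
      Real.sqrt (∑ i, ‖A.mulVec x i‖ ^ 2) := by
    rw [EuclideanSpace.norm_eq]
    rfl
  have h2 : ‖x‖ = Real.sqrt (∑ j, ‖x j‖ ^ 2) := by
    rw [EuclideanSpace.norm_eq]
  rw [h1, h2, ← Real.sqrt_sq hC, ← Real.sqrt_mul (sq_nonneg C)]
  exact Real.sqrt_le_sqrt (hb x)
theorem unstructured_finite_amplitude_stability {Y : Type*}
    [Fintype Y] [DecidableEq Y] [Nonempty Y]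
    (u : Y → (Fin 3 → ℂ))
    (M : Matrix ((Fin 3 × Fin 3) × Y) (Fin 3 × Y) ℂ)
    (h : (Finset.univ.sup' Finset.univ_nonempty
          (fun y => Real.sqrt (‖u y 0‖ ^ 2 + ‖u y 1‖ ^ 2 + ‖u y 2‖ ^ 2))) * ‖M‖ < 1) :
    IsUnit (1 - M * Matrix.blockDiagonal (fun y => uΞ (u y))) := by
  set S : ℝ := Finset.univ.sup' Finset.univ_nonempty
      (fun y => Real.sqrt (‖u y 0‖ ^ 2 + ‖u y 1‖ ^ 2 + ‖u y 2‖ ^ 2)) with hS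
  have hS0 : 0 ≤ S := by
    obtain ⟨y⟩ := ‹Nonempty Y›
    refine le_trans (Real.sqrt_nonneg (‖u y 0‖ ^ 2 + ‖u y 1‖ ^ 2 + ‖u y 2‖ ^ 2)) ?_
    rw [hS]
    exact Finset.le_sup' (f := fun y => Real.sqrt (‖u y 0‖ ^ 2 + ‖u y 1‖ ^ 2 + ‖u y 2‖ ^ 2))
      (Finset.mem_univ y)
  -- key bound on each block
  have hblock : ∀ y : Y, ∑ j : Fin 3, ‖u y j‖ ^ 2 ≤ S ^ 2 := by
    intro y
    have h1 : Real.sqrt (‖u y 0‖ ^ 2 + ‖u y 1‖ ^ 2 + ‖u y 2‖ ^ 2) ≤ S := by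
      rw [hS]
      exact Finset.le_sup' (f := fun y => Real.sqrt (‖u y 0‖ ^ 2 + ‖u y 1‖ ^ 2 + ‖u y 2‖ ^ 2))
        (Finset.mem_univ y)
    have h2 : ∑ j : Fin 3, ‖u y j‖ ^ 2 = ‖u y 0‖ ^ 2 + ‖u y 1‖ ^ 2 + ‖u y 2‖ ^ 2 := by
      simp [Fin.sum_univ_three]
    rw [h2]
    have := Real.sqrt_le_sqrt (le_of_eq (Real.sq_sqrt (by positivity :
      (0:ℝ) ≤ ‖u y 0‖ ^ 2 + ‖u y 1‖ ^ 2 + ‖u y 2‖ ^ 2)).symm)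
    calc ‖u y 0‖ ^ 2 + ‖u y 1‖ ^ 2 + ‖u y 2‖ ^ 2
        = Real.sqrt (‖u y 0‖ ^ 2 + ‖u y 1‖ ^ 2 + ‖u y 2‖ ^ 2) ^ 2 := by
          rw [Real.sq_sqrt (by positivity)]
      _ ≤ S ^ 2 := by
          exact pow_le_pow_left₀ (Real.sqrt_nonneg _) h1 2
  -- bound the norm of the block diagonal matrix
  have hB : ‖Matrix.blockDiagonal (fun y => uΞ (u y))‖ ≤ S := by
    refine l2_opNorm_le_of_sq _ hS0 fun x => ?_
    have hval : ∀ (i : Fin 3) (y : Y),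
        (Matrix.blockDiagonal (fun y => uΞ (u y))).mulVec x (i, y)
          = ∑ j : Fin 3, -(u y j) * x ((i, j), y) := by
      intro i y
      simp [Matrix.mulVec, dotProduct, Fintype.sum_prod_type,
        Matrix.blockDiagonal_apply, uΞ, ite_mul, Finset.mul_sum]
    calc ∑ p : Fin 3 × Y, ‖(Matrix.blockDiagonal (fun y => uΞ (u y))).mulVec x p‖ ^ 2
        = ∑ i : Fin 3, ∑ y : Y, ‖∑ j : Fin 3, -(u y j) * x ((i, j), y)‖ ^ 2 := by
          rw [Fintype.sum_prod_type]
          exact Finset.sum_congr rfl fun i _ => Finset.sum_congr rfl fun y _ => by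
            rw [hval i y]
      _ ≤ ∑ i : Fin 3, ∑ y : Y, S ^ 2 * ∑ j : Fin 3, ‖x ((i, j), y)‖ ^ 2 := by
          refine Finset.sum_le_sum fun i _ => Finset.sum_le_sum fun y _ => ?_
          have hcs : ‖∑ j : Fin 3, -(u y j) * x ((i, j), y)‖ ^ 2
              ≤ (∑ j : Fin 3, ‖u y j‖ ^ 2) * ∑ j : Fin 3, ‖x ((i, j), y)‖ ^ 2 := by
            have htri : ‖∑ j : Fin 3, -(u y j) * x ((i, j), y)‖
                ≤ ∑ j : Fin 3, ‖u y j‖ * ‖x ((i, j), y)‖ := by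
              refine le_trans (norm_sum_le _ _) (Finset.sum_le_sum fun j _ => ?_)
              rw [norm_mul, norm_neg]
            calc ‖∑ j : Fin 3, -(u y j) * x ((i, j), y)‖ ^ 2
                ≤ (∑ j : Fin 3, ‖u y j‖ * ‖x ((i, j), y)‖) ^ 2 := by
                  exact pow_le_pow_left₀ (norm_nonneg _) htri 2
              _ ≤ (∑ j : Fin 3, ‖u y j‖ ^ 2) * ∑ j : Fin 3, ‖x ((i, j), y)‖ ^ 2 :=
                  Finset.sum_mul_sq_le_sq_mul_sq _ _ _
          refine le_trans hcs ?_
          exact mul_le_mul_of_nonneg_right (hblock y)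
            (Finset.sum_nonneg fun j _ => sq_nonneg _)
      _ = S ^ 2 * ∑ p : (Fin 3 × Fin 3) × Y, ‖x p‖ ^ 2 := by
          simp_rw [← Finset.mul_sum]
          congr 1
          rw [Fintype.sum_prod_type]
          simp_rw [Fintype.sum_prod_type]
          exact Finset.sum_congr rfl fun i _ => Finset.sum_comm
  -- conclude
  have hMB : ‖M * Matrix.blockDiagonal (fun y => uΞ (u y))‖ < 1 := by
    calc ‖M * Matrix.blockDiagonal (fun y => uΞ (u y))‖
        ≤ ‖M‖ * ‖Matrix.blockDiagonal (fun y => uΞ (u y))‖ := Matrix.l2_opNorm_mul _ _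
      _ ≤ ‖M‖ * S := mul_le_mul_of_nonneg_left hB (norm_nonneg _)
      _ = S * ‖M‖ := mul_comm _ _
      _ < 1 := h
  exact ⟨Units.oneSub _ hMB, rfl⟩
end
end
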